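/- Let f : ℝ^n → ℂ be a Schwartz function with ∫_{ℝ^n} f(v) dv = 0, and let σ_λ(f)(v) = λ^{d} f(λ·v) where λ·v = (λ^{q_1}v_1,...,λ^{q_n}v_n) and d = Σ_j q_j. Then for every Schwartz function g and every λ ≥ 1, the L¹-norm of the (abelian) convolution σ_λ(f) * g satisfies ‖σ_λ(f) * g‖_{L¹} ≤ C λ^{-1} for some constant C depending on f and g; consequently ∫_1^∞ ‖σ_λ(f)*g‖_{L¹} dλ/λ < ∞. -/

import Mathlib

open MeasureTheory
open scoped BigOperators SchwartzMap

/-- The anisotropic dilation `λ · (v_1, …, v_n) = (λ^{q_1} v_1, …, λ^{q_n} v_n)`. -/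
def dilate {n : ℕ} (Q : Fin n → ℕ) (l : ℝ) (v : Fin n → ℝ) : Fin n → ℝ :=
  fun j => l ^ (Q j) * v j

section Aux
variable {n : ℕ}


lemma dilate_eq_toLin' (Q : Fin n → ℕ) (l : ℝ) :
    dilate Q l = (Matrix.toLin' (Matrix.diagonal fun j => l ^ Q j) : (Fin n → ℝ) →ₗ[ℝ] _) := by
  funext v j
  simp [dilate, Matrix.toLin'_apply, Matrix.mulVec_diagonal]

lemma det_dilate (Q : Fin n → ℕ) (l : ℝ) :
    LinearMap.det (Matrix.toLin' (Matrix.diagonal fun j => l ^ Q j) : (Fin n → ℝ) →ₗ[ℝ] _)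
      = l ^ (∑ j, Q j) := by
  rw [LinearMap.det_toLin', Matrix.det_diagonal, Finset.prod_pow_eq_pow_sum]

lemma map_dilate (Q : Fin n → ℕ) {l : ℝ} (hl : 0 < l) :
    Measure.map (dilate Q l) (volume : Measure (Fin n → ℝ))
      = ENNReal.ofReal ((l ^ (∑ j, Q j))⁻¹) • volume := by
  rw [dilate_eq_toLin']
  rw [Measure.map_linearMap_addHaar_eq_smul_addHaar _ (by rw [det_dilate]; positivity)]
  rw [det_dilate, abs_of_nonneg (by positivity)]

lemma continuous_dilate (Q : Fin n → ℕ) (l : ℝ) : Continuous (dilate Q l) := by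
  exact continuous_pi fun j => (continuous_const.mul (continuous_apply j))

lemma integral_dilate {F : Type*} [NormedAddCommGroup F] [NormedSpace ℝ F]
    (Q : Fin n → ℕ) {l : ℝ} (hl : 0 < l) {h : (Fin n → ℝ) → F} (hh : Continuous h) :
    ∫ y, h (dilate Q l y) = (l ^ (∑ j, Q j))⁻¹ • ∫ z, h z := by
  rw [← integral_map (by exact (continuous_dilate Q l).measurable.aemeasurable)
    hh.aestronglyMeasurable, map_dilate Q hl, integral_smul_measure,
    ENNReal.toReal_ofReal (by positivity)]

lemma integrable_dilate {F : Type*} [NormedAddCommGroup F]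
    (Q : Fin n → ℕ) {l : ℝ} (hl : 0 < l) {h : (Fin n → ℝ) → F} (hh : Continuous h)
    (hi : Integrable h) : Integrable (fun y => h (dilate Q l y)) := by
  have := (integrable_map_measure (μ := (volume : Measure (Fin n → ℝ)))
      (f := dilate Q l) (g := h) ?_ ?_).mp ?_
  · exact this
  · rw [map_dilate Q hl]; exact hh.aestronglyMeasurable
  · exact (continuous_dilate Q l).measurable.aemeasurable
  · rw [map_dilate Q hl]
    exact hi.smul_measure ENNReal.ofReal_ne_top


lemma trans_L1 (g : SchwartzMap (Fin n → ℝ) ℂ) :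
    ∃ L : ℝ, 0 ≤ L ∧ ∀ y : Fin n → ℝ, (∫ x, ‖g (x - y) - g x‖) ≤ L * ‖y‖ := by
  obtain ⟨D, hD⟩ : ∃ D : ℝ, ∀ z : Fin n → ℝ,
      (1 + ‖z‖) ^ (n + 1) * ‖fderiv ℝ (⇑g) z‖ ≤ D :=
    ⟨2 ^ (n + 1) * (Finset.Iic ((n + 1 : ℕ), (0 : ℕ))).sup
        (fun m => SchwartzMap.seminorm ℝ m.1 m.2) (SchwartzMap.fderivCLM ℝ (Fin n → ℝ) ℂ g), fun z => by
      simpa [norm_iteratedFDeriv_zero, SchwartzMap.fderivCLM_apply] using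
        SchwartzMap.one_add_le_sup_seminorm_apply (𝕜 := ℝ) (m := (n + 1, 0)) (k := n + 1)
          (n := 0) le_rfl le_rfl (SchwartzMap.fderivCLM ℝ (Fin n → ℝ) ℂ g) z⟩
  have hD0 : 0 ≤ D := le_trans (by positivity) (hD 0)
  set M : (Fin n → ℝ) → ℝ := fun x => D * 2 ^ (n + 1) * ((1 + ‖x‖) ^ (n + 1))⁻¹ with hM
  have hM_int : Integrable M := by
    have h1 : Integrable (fun x : Fin n → ℝ => D * 2 ^ (n + 1) * (1 + ‖x‖) ^ (-((n : ℝ) + 1))) :=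
      (integrable_one_add_norm (by rw [Module.finrank_pi]; norm_num)).const_mul _
    refine h1.congr (Filter.Eventually.of_forall fun x => ?_)
    simp only [hM]
    rw [show -((n : ℝ) + 1) = -((n + 1 : ℕ) : ℝ) by push_cast; ring,
      Real.rpow_neg (by positivity), Real.rpow_natCast]
  have hM0 : ∀ x, 0 ≤ M x := fun x => by positivity
  have hMz : ∀ x z : Fin n → ℝ, z ∈ Metric.closedBall x 1 → ‖fderiv ℝ (⇑g) z‖ ≤ M x := by
    intro x z hz
    have hd : ‖z - x‖ ≤ 1 := by simpa [dist_eq_norm] using hz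
    have hzx : ‖x‖ ≤ ‖z‖ + 1 := by
      have h4 : ‖x‖ ≤ ‖z‖ + ‖z - x‖ := by simpa using norm_sub_le z (z - x)
      linarith
    have h2 : (1 + ‖x‖) ^ (n + 1) ≤ 2 ^ (n + 1) * (1 + ‖z‖) ^ (n + 1) := by
      rw [← mul_pow]
      exact pow_le_pow_left₀ (by positivity) (by linarith [norm_nonneg z]) _
    have hpz : (0:ℝ) < (1 + ‖z‖) ^ (n + 1) := by positivity
    have hpx : (0:ℝ) < (1 + ‖x‖) ^ (n + 1) := by positivity
    have h3 : ‖fderiv ℝ (⇑g) z‖ ≤ D / (1 + ‖z‖) ^ (n + 1) :=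
      (le_div_iff₀ hpz).mpr (by rw [mul_comm]; exact hD z)
    refine h3.trans ?_
    have h5 : D / (1 + ‖z‖) ^ (n + 1) ≤ D * 2 ^ (n + 1) / (1 + ‖x‖) ^ (n + 1) := by
      rw [div_le_div_iff₀ hpz hpx]
      nlinarith
    simpa [div_eq_mul_inv] using h5
  -- pointwise Lipschitz bound for small y
  have hlip : ∀ y : Fin n → ℝ, ‖y‖ ≤ 1 → ∀ x, ‖g (x - y) - g x‖ ≤ M x * ‖y‖ := by
    intro y hy x
    have := (convex_closedBall x 1).norm_image_sub_le_of_norm_fderiv_le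
      (f := ⇑g) (fun z _ => g.differentiable.differentiableAt)
      (fun z hz => hMz x z hz) (Metric.mem_closedBall_self zero_le_one)
      (show x - y ∈ Metric.closedBall x 1 by
        simpa [dist_eq_norm, norm_sub_rev] using hy)
    simpa [norm_sub_rev, sub_sub_cancel_left, norm_neg] using this
  have hg1 : Integrable (fun x : Fin n → ℝ => ‖g x‖) := g.integrable.norm
  refine ⟨(∫ x, M x) + 2 * ∫ x, ‖g x‖, by positivity, fun y => ?_⟩
  have hMI0 : 0 ≤ ∫ x, M x := integral_nonneg hM0
  have hgI0 : 0 ≤ ∫ x, ‖g x‖ := integral_nonneg fun x => norm_nonneg _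
  by_cases hy : ‖y‖ ≤ 1
  · calc (∫ x, ‖g (x - y) - g x‖) ≤ ∫ x, M x * ‖y‖ := by
          refine integral_mono_of_nonneg (Filter.Eventually.of_forall fun x => norm_nonneg _)
            (hM_int.mul_const _) (Filter.Eventually.of_forall fun x => hlip y hy x)
    _ = (∫ x, M x) * ‖y‖ := by rw [integral_mul_const]
    _ ≤ ((∫ x, M x) + 2 * ∫ x, ‖g x‖) * ‖y‖ := by nlinarith [norm_nonneg y]
  · push_neg at hy
    calc (∫ x, ‖g (x - y) - g x‖) ≤ ∫ x, (‖g (x - y)‖ + ‖g x‖) := by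
          refine integral_mono_of_nonneg (Filter.Eventually.of_forall fun x => norm_nonneg _)
            ((hg1.comp_sub_right y).add hg1)
            (Filter.Eventually.of_forall fun x => norm_sub_le _ _)
    _ = (∫ x, ‖g (x - y)‖) + ∫ x, ‖g x‖ := integral_add (hg1.comp_sub_right y) hg1
    _ = 2 * ∫ x, ‖g x‖ := by
          rw [integral_sub_right_eq_self (fun x => ‖g x‖) y]; ring
    _ ≤ ((∫ x, M x) + 2 * ∫ x, ‖g x‖) * ‖y‖ := by nlinarith
lemma conv_bound (Q : Fin n → ℕ) (hQ : ∀ j, 1 ≤ Q j)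
    (f g : SchwartzMap (Fin n → ℝ) ℂ) (hf : ∫ v, f v = 0)
    {L : ℝ} (hL0 : 0 ≤ L) (hLy : ∀ y : Fin n → ℝ, (∫ x, ‖g (x - y) - g x‖) ≤ L * ‖y‖)
    {l : ℝ} (hl : 1 ≤ l) :
    (∫ x, ‖∫ y, (l : ℂ) ^ (∑ j, Q j) * f (dilate Q l y) * g (x - y)‖)
      ≤ (L * ∫ z : Fin n → ℝ, ‖z‖ * ‖f z‖) / l := by
  have hl0 : (0:ℝ) < l := zero_lt_one.trans_le hl
  set d := ∑ j, Q j with hd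
  set φ : (Fin n → ℝ) → ℂ := fun y => (l : ℂ) ^ d * f (dilate Q l y) with hφ
  have hφc : Continuous φ := continuous_const.mul (f.continuous.comp (continuous_dilate Q l))
  have hfi : Integrable (fun y => f (dilate Q l y)) :=
    integrable_dilate Q hl0 f.continuous f.integrable
  have hφi : Integrable φ := hfi.const_mul _
  have hnφ : ∀ y, ‖φ y‖ = l ^ d * ‖f (dilate Q l y)‖ := fun y => by
    simp [hφ, norm_mul, norm_pow, Complex.norm_real, abs_of_pos hl0]
  have hφ0 : ∫ y, φ y = 0 := by
    simp only [hφ]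
    rw [integral_const_mul, integral_dilate Q hl0 f.continuous, hf, smul_zero, mul_zero]
  -- weighted estimate
  have hfw : Integrable (fun z : Fin n → ℝ => ‖z‖ * ‖f z‖) := by
    simpa using f.integrable_pow_mul volume 1
  have hinv : ∀ z : Fin n → ℝ, ‖dilate Q l⁻¹ z‖ ≤ l⁻¹ * ‖z‖ := by
    intro z
    refine pi_norm_le_iff_of_nonneg (by positivity) |>.mpr fun j => ?_
    have h1 : l⁻¹ ^ Q j ≤ l⁻¹ ^ 1 :=
      pow_le_pow_of_le_one (by positivity) (inv_le_one_of_one_le₀ hl) (hQ j)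
    calc ‖l⁻¹ ^ Q j * z j‖ = l⁻¹ ^ Q j * ‖z j‖ := by
          rw [norm_mul, Real.norm_eq_abs, abs_of_nonneg (by positivity)]
    _ ≤ l⁻¹ * ‖z‖ := by
          have := norm_le_pi_norm z j
          have h0 : (0:ℝ) ≤ l⁻¹ ^ Q j := by positivity
          have h2 : l⁻¹ ^ Q j ≤ l⁻¹ := by simpa using h1
          nlinarith [norm_nonneg (z j), norm_nonneg z]
  have hTT : ∀ y : Fin n → ℝ, dilate Q l⁻¹ (dilate Q l y) = y := by
    intro y; funext j
    simp only [dilate, ← mul_assoc, inv_pow]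
    rw [inv_mul_cancel₀ (pow_ne_zero _ hl0.ne'), one_mul]
  set ψ : (Fin n → ℝ) → ℝ := fun z => l ^ d * ‖f z‖ * ‖dilate Q l⁻¹ z‖ with hψ
  have hψc : Continuous ψ :=
    (continuous_const.mul f.continuous.norm).mul (continuous_dilate Q l⁻¹).norm
  have hψi : Integrable ψ := by
    refine ((hfw.const_mul (l ^ d * l⁻¹)).mono' hψc.aestronglyMeasurable
      (Filter.Eventually.of_forall fun z => ?_))
    rw [Real.norm_eq_abs, abs_of_nonneg (by positivity)]
    calc l ^ d * ‖f z‖ * ‖dilate Q l⁻¹ z‖ ≤ l ^ d * ‖f z‖ * (l⁻¹ * ‖z‖) := by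
          have h0 : (0:ℝ) ≤ l ^ d * ‖f z‖ := by positivity
          nlinarith [hinv z, norm_nonneg (f z)]
    _ = l ^ d * l⁻¹ * (‖z‖ * ‖f z‖) := by ring
  have heq : ∀ y, ‖φ y‖ * ‖y‖ = ψ (dilate Q l y) := fun y => by
    rw [hnφ]; simp only [hψ, hTT]
  have hwint : Integrable (fun y => ‖φ y‖ * ‖y‖) := by
    rw [show (fun y : Fin n → ℝ => ‖φ y‖ * ‖y‖) = fun y => ψ (dilate Q l y) from funext heq]
    exact integrable_dilate Q hl0 hψc hψi
  have hweight : (∫ y, ‖φ y‖ * ‖y‖) ≤ l⁻¹ * ∫ z : Fin n → ℝ, ‖z‖ * ‖f z‖ := by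
    calc (∫ y, ‖φ y‖ * ‖y‖) = ∫ y, ψ (dilate Q l y) := by simp_rw [heq]
    _ = (l ^ d)⁻¹ • ∫ z, ψ z := integral_dilate Q hl0 hψc
    _ = (l ^ d)⁻¹ * (l ^ d * ∫ z, ‖f z‖ * ‖dilate Q l⁻¹ z‖) := by
          rw [smul_eq_mul]
          congr 1
          simp only [hψ, mul_assoc]
          rw [integral_const_mul]
    _ = ∫ z, ‖f z‖ * ‖dilate Q l⁻¹ z‖ := by
          rw [← mul_assoc, inv_mul_cancel₀ (by positivity), one_mul]
    _ ≤ ∫ z, l⁻¹ * (‖z‖ * ‖f z‖) := by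
          refine integral_mono_of_nonneg
            (Filter.Eventually.of_forall fun z => by positivity)
            (hfw.const_mul l⁻¹) (Filter.Eventually.of_forall fun z => ?_)
          have := hinv z
          nlinarith [norm_nonneg (f z), norm_nonneg z, norm_nonneg (dilate Q l⁻¹ z)]
    _ = l⁻¹ * ∫ z : Fin n → ℝ, ‖z‖ * ‖f z‖ := integral_const_mul _ _
  -- pointwise bound on the convolution
  have hgbdd : ∃ C, ∀ y : Fin n → ℝ, ‖g y‖ ≤ C :=
    ⟨(SchwartzMap.seminorm ℝ 0 0) g, fun y => g.norm_le_seminorm ℝ y⟩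
  have hkey : ∀ x, ‖∫ y, φ y * g (x - y)‖ ≤ ∫ y, ‖φ y‖ * ‖g (x - y) - g x‖ := by
    intro x
    have hgb : Integrable (fun y => φ y * g (x - y)) := by
      have := hφi.bdd_mul
        ((g.continuous.comp (continuous_const.sub continuous_id)).aestronglyMeasurable)
        (c := (SchwartzMap.seminorm ℝ 0 0) g) (Filter.Eventually.of_forall fun y => g.norm_le_seminorm ℝ (x - y))
      simpa [mul_comm] using this
    have hsub : ∫ y, φ y * g (x - y) = ∫ y, φ y * (g (x - y) - g x) := by
      simp_rw [mul_sub]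
      rw [integral_sub hgb (hφi.mul_const (g x)), integral_mul_const, hφ0, zero_mul, sub_zero]
    calc ‖∫ y, φ y * g (x - y)‖ = ‖∫ y, φ y * (g (x - y) - g x)‖ := by rw [hsub]
    _ ≤ ∫ y, ‖φ y * (g (x - y) - g x)‖ := norm_integral_le_integral_norm _
    _ = ∫ y, ‖φ y‖ * ‖g (x - y) - g x‖ := by simp_rw [norm_mul]
  -- product integrability for Fubini
  set F : ((Fin n → ℝ) × (Fin n → ℝ)) → ℝ := fun p => ‖φ p.2‖ * ‖g (p.1 - p.2) - g p.1‖ with hF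
  have hFc : Continuous F :=
    ((hφc.comp continuous_snd).norm).mul
      (((g.continuous.comp (continuous_fst.sub continuous_snd)).sub
        (g.continuous.comp continuous_fst)).norm)
  have hFi : Integrable F (volume.prod volume) := by
    have h1 : Integrable (fun p : (Fin n → ℝ) × (Fin n → ℝ) => ‖φ p.2‖ * ‖g (p.1 - p.2)‖)
        (volume.prod volume) := by
      have hmeas : AEStronglyMeasurable
          (fun p : (Fin n → ℝ) × (Fin n → ℝ) => ‖φ p.2‖ * ‖g (p.1 - p.2)‖)
          (volume.prod volume) :=
        (((hφc.comp continuous_snd).norm).mul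
          ((g.continuous.comp (continuous_fst.sub continuous_snd)).norm)).aestronglyMeasurable
      rw [integrable_prod_iff' hmeas]
      constructor
      · refine Filter.Eventually.of_forall fun y => ?_
        exact (g.integrable.norm.comp_sub_right y).const_mul ‖φ y‖
      · refine (hφi.norm.mul_const (∫ x : Fin n → ℝ, ‖g x‖)).congr
          (Filter.Eventually.of_forall fun y => ?_)
        simp only [norm_mul, norm_norm]
        rw [integral_const_mul, integral_sub_right_eq_self (fun x => ‖g x‖) y]
    have h2 : Integrable (fun p : (Fin n → ℝ) × (Fin n → ℝ) => ‖g p.1‖ * ‖φ p.2‖)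
        (volume.prod volume) := g.integrable.norm.mul_prod hφi.norm
    refine (h1.add h2).mono' hFc.aestronglyMeasurable (Filter.Eventually.of_forall fun p => ?_)
    rw [Real.norm_eq_abs, abs_of_nonneg (mul_nonneg (norm_nonneg _) (norm_nonneg _))]
    have h3 := norm_sub_le (g (p.1 - p.2)) (g p.1)
    simp only [Pi.add_apply]
    nlinarith [mul_le_mul_of_nonneg_left h3 (norm_nonneg (φ p.2))]
  have hH_int : Integrable (fun x => ∫ y, F (x, y)) := hFi.integral_prod_left
  -- main chain
  show (∫ x, ‖∫ y, φ y * g (x - y)‖) ≤ (L * ∫ z : Fin n → ℝ, ‖z‖ * ‖f z‖) / l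
  calc (∫ x, ‖∫ y, φ y * g (x - y)‖)
      ≤ ∫ x, ∫ y, ‖φ y‖ * ‖g (x - y) - g x‖ := by
        refine integral_mono_of_nonneg (Filter.Eventually.of_forall fun x => norm_nonneg _)
          hH_int (Filter.Eventually.of_forall fun x => hkey x)
  _ = ∫ y, ∫ x, ‖φ y‖ * ‖g (x - y) - g x‖ := integral_integral_swap hFi
  _ = ∫ y, ‖φ y‖ * ∫ x, ‖g (x - y) - g x‖ := by
        congr 1; funext y; exact integral_const_mul _ _
  _ ≤ ∫ y, L * (‖φ y‖ * ‖y‖) := by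
        refine integral_mono_of_nonneg
          (Filter.Eventually.of_forall fun y =>
            mul_nonneg (norm_nonneg _) (integral_nonneg fun x => norm_nonneg _))
          (hwint.const_mul L) (Filter.Eventually.of_forall fun y => ?_)
        calc ‖φ y‖ * ∫ x, ‖g (x - y) - g x‖ ≤ ‖φ y‖ * (L * ‖y‖) :=
              mul_le_mul_of_nonneg_left (hLy y) (norm_nonneg _)
        _ = L * (‖φ y‖ * ‖y‖) := by ring
  _ = L * ∫ y, ‖φ y‖ * ‖y‖ := integral_const_mul _ _
  _ ≤ L * (l⁻¹ * ∫ z : Fin n → ℝ, ‖z‖ * ‖f z‖) := mul_le_mul_of_nonneg_left hweight hL0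
  _ = (L * ∫ z : Fin n → ℝ, ‖z‖ * ‖f z‖) / l := by ring

end Aux

/-- **Decay of convolutions with dilated mean-zero Schwartz functions.**
Let `f` be a Schwartz function on `ℝⁿ` with `∫ f = 0`, and let
`σ_λ f (v) = λ^d f(λ·v)` be its L¹-normalized anisotropic dilation, where
`d = ∑ q_j` is the homogeneous dimension.  Then for every Schwartz function `g` there is
a constant `C` with `‖σ_λ f ⋆ g‖_{L¹} ≤ C λ⁻¹` for all `λ ≥ 1`; consequently
`∫_1^∞ ‖σ_λ f ⋆ g‖_{L¹} dλ/λ < ∞`. -/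
theorem stmt_16 {n : ℕ} (Q : Fin n → ℕ) (hQ : ∀ j, 1 ≤ Q j)
    (f g : SchwartzMap (Fin n → ℝ) ℂ) (hf : ∫ v, f v = 0) :
    ∃ C : ℝ,
      (∀ l : ℝ, 1 ≤ l →
        (∫ x, ‖∫ y, (l : ℂ) ^ (∑ j, Q j) * f (dilate Q l y) * g (x - y)‖) ≤ C / l) ∧
      IntegrableOn
        (fun l : ℝ =>
          (∫ x, ‖∫ y, (l : ℂ) ^ (∑ j, Q j) * f (dilate Q l y) * g (x - y)‖) / l)
        (Set.Ici 1) := by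
  obtain ⟨L, hL0, hLy⟩ := trans_L1 g
  have hA0 : 0 ≤ ∫ z : Fin n → ℝ, ‖z‖ * ‖f z‖ :=
    integral_nonneg fun z => mul_nonneg (norm_nonneg _) (norm_nonneg _)
  have hC0 : 0 ≤ L * ∫ z : Fin n → ℝ, ‖z‖ * ‖f z‖ := mul_nonneg hL0 hA0
  refine ⟨L * ∫ z : Fin n → ℝ, ‖z‖ * ‖f z‖,
    fun l hl => conv_bound Q hQ f g hf hL0 hLy hl, ?_⟩
  -- measurability
  have hk : Continuous (fun p : (ℝ × (Fin n → ℝ)) × (Fin n → ℝ) =>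
      ((p.1.1 : ℂ)) ^ (∑ j, Q j) * f (dilate Q p.1.1 p.2) * g (p.1.2 - p.2)) := by
    have hdc : Continuous (fun p : (ℝ × (Fin n → ℝ)) × (Fin n → ℝ) => dilate Q p.1.1 p.2) :=
      continuous_pi fun j => ((continuous_fst.fst.pow (Q j)).mul
        ((continuous_apply j).comp continuous_snd))
    exact (((Complex.continuous_ofReal.comp continuous_fst.fst).pow _).mul
      (f.continuous.comp hdc)).mul
      (g.continuous.comp (continuous_fst.snd.sub continuous_snd))
  have hsm1 : StronglyMeasurable (fun q : ℝ × (Fin n → ℝ) =>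
      ∫ y, ((q.1 : ℂ)) ^ (∑ j, Q j) * f (dilate Q q.1 y) * g (q.2 - y)) :=
    hk.stronglyMeasurable.integral_prod_right'
  have hsm2 : StronglyMeasurable (fun l : ℝ =>
      ∫ x, ‖∫ y, (l : ℂ) ^ (∑ j, Q j) * f (dilate Q l y) * g (x - y)‖) :=
    hsm1.norm.integral_prod_right'
  have hB : IntegrableOn
      (fun l : ℝ => (L * ∫ z : Fin n → ℝ, ‖z‖ * ‖f z‖) * l ^ (-2 : ℝ)) (Set.Ici 1) := by
    rw [integrableOn_Ici_iff_integrableOn_Ioi]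
    exact (integrableOn_Ioi_rpow_of_lt (by norm_num) zero_lt_one).const_mul _
  refine hB.mono' ((hsm2.measurable.div measurable_id).stronglyMeasurable.aestronglyMeasurable) ?_
  refine (ae_restrict_iff' measurableSet_Ici).mpr (Filter.Eventually.of_forall fun l hl => ?_)
  have hl1 : (1:ℝ) ≤ l := hl
  have hl0 : (0:ℝ) < l := zero_lt_one.trans_le hl1
  have hΨ0 : 0 ≤ ∫ x, ‖∫ y, (l : ℂ) ^ (∑ j, Q j) * f (dilate Q l y) * g (x - y)‖ :=
    integral_nonneg fun x => norm_nonneg _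
  have hb := conv_bound Q hQ f g hf hL0 hLy hl1
  rw [Real.norm_eq_abs, abs_of_nonneg (div_nonneg hΨ0 hl0.le)]
  have hr2 : l ^ (-2 : ℝ) = (l ^ 2)⁻¹ := by
    rw [show (-2 : ℝ) = -((2:ℕ) : ℝ) by norm_num, Real.rpow_neg hl0.le, Real.rpow_natCast]
  calc (∫ x, ‖∫ y, (l : ℂ) ^ (∑ j, Q j) * f (dilate Q l y) * g (x - y)‖) / l
      ≤ ((L * ∫ z : Fin n → ℝ, ‖z‖ * ‖f z‖) / l) / l := by
        have h := mul_le_mul_of_nonneg_right hb (inv_nonneg.mpr hl0.le)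
        simpa [div_eq_mul_inv] using h
  _ = (L * ∫ z : Fin n → ℝ, ‖z‖ * ‖f z‖) * l ^ (-2 : ℝ) := by
        rw [hr2, div_div, div_eq_mul_inv, sq]
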